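/- The three-variable Hermite–Kampé de Fériet polynomials satisfy the addition formula H_n^{(3)}(x₁ + x₂, y₁ + y₂, z₁ + z₂) = Σ_{k=0}^{n} C(n, k) · H_{n−k}^{(3)}(x₁, y₁, z₁) · H_k^{(3)}(x₂, y₂, z₂) for all real arguments and every natural number n. -/

import Mathlib

open Finset

/-- The two-variable Hermite–Kampé de Fériet polynomials. -/
noncomputable def hermiteKdF2 (n : ℕ) (x y : ℝ) : ℝ :=
  (n.factorial : ℝ) * ∑ k ∈ Finset.range (n / 2 + 1),
    x ^ (n - 2 * k) * y ^ k / ((n - 2 * k).factorial * k.factorial)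

/-- The three-variable Hermite–Kampé de Fériet polynomials. -/
noncomputable def hermiteKdF3 (n : ℕ) (x y z : ℝ) : ℝ :=
  (n.factorial : ℝ) * ∑ k ∈ Finset.range (n / 3 + 1),
    z ^ k * hermiteKdF2 (n - 3 * k) x y / ((n - 3 * k).factorial * k.factorial)

/-- The power series exp(y * X^d). -/
noncomputable def expPow (y : ℝ) (d : ℕ) : PowerSeries ℝ :=
  PowerSeries.mk fun n => if d ∣ n then y ^ (n / d) / (n / d).factorial else 0

lemma coeff_expPow (y : ℝ) (d n : ℕ) :
    PowerSeries.coeff (R := ℝ) n (expPow y d) =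
      if d ∣ n then y ^ (n / d) / (n / d).factorial else 0 := by
  simp [expPow]

lemma coeff_mul_expPow (A : PowerSeries ℝ) (y : ℝ) (d n : ℕ) (hd : 0 < d) :
    PowerSeries.coeff (R := ℝ) n (A * expPow y d) =
      ∑ k ∈ Finset.range (n / d + 1),
        PowerSeries.coeff (R := ℝ) (n - d * k) A * (y ^ k / k.factorial) := by
  rw [PowerSeries.coeff_mul, Finset.Nat.sum_antidiagonal_eq_sum_range_succ_mk]
  rw [← Finset.sum_filter_of_ne (p := fun j => d ∣ n - j)
    (by
      intro j hj hne
      by_contra hdvd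
      simp [coeff_expPow, hdvd] at hne)]
  refine Finset.sum_nbij' (fun j => (n - j) / d) (fun k => n - d * k) ?_ ?_ ?_ ?_ ?_
  · intro j hj
    simp only [Finset.mem_filter, Finset.mem_range] at hj ⊢
    exact Nat.lt_succ_of_le (Nat.div_le_div_right (Nat.sub_le _ _))
  · intro k hk
    simp only [Finset.mem_range] at hk
    have hkn : d * k ≤ n := by
      calc d * k ≤ d * (n / d) := Nat.mul_le_mul_left d (Nat.lt_succ_iff.mp hk)
        _ ≤ n := Nat.mul_div_le n d
    simp only [Finset.mem_filter, Finset.mem_range]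
    refine ⟨Nat.lt_succ_of_le (Nat.sub_le _ _), ?_⟩
    rw [Nat.sub_sub_self hkn]
    exact Dvd.intro k rfl
  · intro j hj
    simp only [Finset.mem_filter, Finset.mem_range] at hj
    obtain ⟨hjn, hdvd⟩ := hj
    show n - d * ((n - j) / d) = j
    rw [Nat.mul_div_cancel' hdvd, Nat.sub_sub_self (Nat.lt_succ_iff.mp hjn)]
  · intro k hk
    simp only [Finset.mem_range] at hk
    have hkn : d * k ≤ n := by
      calc d * k ≤ d * (n / d) := Nat.mul_le_mul_left d (Nat.lt_succ_iff.mp hk)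
        _ ≤ n := Nat.mul_div_le n d
    show (n - (n - d * k)) / d = k
    rw [Nat.sub_sub_self hkn, Nat.mul_div_cancel_left k hd]
  · intro j hj
    simp only [Finset.mem_filter, Finset.mem_range] at hj
    obtain ⟨hjn, hdvd⟩ := hj
    rw [coeff_expPow, if_pos hdvd, Nat.mul_div_cancel' hdvd,
      Nat.sub_sub_self (Nat.lt_succ_iff.mp hjn)]

lemma expPow_mul (y y' : ℝ) (d : ℕ) (hd : 0 < d) :
    expPow y d * expPow y' d = expPow (y + y') d := by
  ext n
  rw [coeff_mul_expPow _ _ _ _ hd, coeff_expPow]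
  by_cases hdvd : d ∣ n
  · rw [if_pos hdvd]
    obtain ⟨m, rfl⟩ := hdvd
    rw [Nat.mul_div_cancel_left m hd]
    calc ∑ k ∈ Finset.range (m + 1),
          PowerSeries.coeff (R := ℝ) (d * m - d * k) (expPow y d) * (y' ^ k / k.factorial)
        = ∑ k ∈ Finset.range (m + 1),
          (y ^ (m - k) / (m - k).factorial) * (y' ^ k / k.factorial) := by
          refine Finset.sum_congr rfl fun k hk => ?_
          simp only [Finset.mem_range, Nat.lt_succ_iff] at hk
          have h1 : d * m - d * k = d * (m - k) := (Nat.mul_sub d m k).symm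
          rw [h1, coeff_expPow, if_pos ⟨m - k, rfl⟩, Nat.mul_div_cancel_left _ hd]
      _ = (y + y') ^ m / m.factorial := by
          rw [add_comm y y', add_pow, Finset.sum_div]
          refine Finset.sum_congr rfl fun k hk => ?_
          simp only [Finset.mem_range, Nat.lt_succ_iff] at hk
          rw [Nat.cast_choose ℝ hk]
          have h1 : ((m - k).factorial : ℝ) ≠ 0 := Nat.cast_ne_zero.mpr (Nat.factorial_ne_zero _)
          have h2 : (k.factorial : ℝ) ≠ 0 := Nat.cast_ne_zero.mpr (Nat.factorial_ne_zero _)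
          have h3 : (m.factorial : ℝ) ≠ 0 := Nat.cast_ne_zero.mpr (Nat.factorial_ne_zero _)
          field_simp
  · rw [if_neg hdvd]
    apply Finset.sum_eq_zero
    intro k hk
    simp only [Finset.mem_range, Nat.lt_succ_iff] at hk
    have hkn : d * k ≤ n := le_trans (Nat.mul_le_mul_left d hk) (Nat.mul_div_le n d)
    have : ¬ d ∣ (n - d * k) := by
      intro h
      exact hdvd (by
        have := Nat.dvd_add h (Dvd.intro k rfl)
        rwa [Nat.sub_add_cancel hkn] at this)
    rw [coeff_expPow, if_neg this, zero_mul]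

lemma coeff_E12 (x y : ℝ) (n : ℕ) :
    PowerSeries.coeff (R := ℝ) n (expPow x 1 * expPow y 2) = hermiteKdF2 n x y / n.factorial := by
  rw [coeff_mul_expPow _ _ _ _ (by norm_num), hermiteKdF2]
  have h3 : (n.factorial : ℝ) ≠ 0 := Nat.cast_ne_zero.mpr (Nat.factorial_ne_zero _)
  rw [mul_comm (n.factorial : ℝ), mul_div_assoc, div_self h3, mul_one, Finset.sum_congr rfl]
  intro k hk
  rw [coeff_expPow, if_pos (one_dvd _), Nat.div_one]
  rw [div_mul_div_comm]

lemma coeff_E123 (x y z : ℝ) (n : ℕ) :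
    PowerSeries.coeff (R := ℝ) n (expPow x 1 * expPow y 2 * expPow z 3) =
      hermiteKdF3 n x y z / n.factorial := by
  rw [coeff_mul_expPow _ _ _ _ (by norm_num), hermiteKdF3]
  have h3 : (n.factorial : ℝ) ≠ 0 := Nat.cast_ne_zero.mpr (Nat.factorial_ne_zero _)
  rw [mul_comm (n.factorial : ℝ), mul_div_assoc, div_self h3, mul_one, Finset.sum_congr rfl]
  intro k hk
  rw [coeff_E12]
  field_simp

theorem hermiteKdF3_add (n : ℕ) (x₁ x₂ y₁ y₂ z₁ z₂ : ℝ) :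
    hermiteKdF3 n (x₁ + x₂) (y₁ + y₂) (z₁ + z₂) =
      ∑ k ∈ Finset.range (n + 1),
        (n.choose k : ℝ) * hermiteKdF3 (n - k) x₁ y₁ z₁ * hermiteKdF3 k x₂ y₂ z₂ := by
  have key : expPow (x₁ + x₂) 1 * expPow (y₁ + y₂) 2 * expPow (z₁ + z₂) 3 =
      (expPow x₂ 1 * expPow y₂ 2 * expPow z₂ 3) *
        (expPow x₁ 1 * expPow y₁ 2 * expPow z₁ 3) := by
    rw [← expPow_mul x₁ x₂ 1 (by norm_num), ← expPow_mul y₁ y₂ 2 (by norm_num),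
      ← expPow_mul z₁ z₂ 3 (by norm_num)]
    ring
  have h := congrArg (PowerSeries.coeff (R := ℝ) n) key
  rw [coeff_E123, PowerSeries.coeff_mul,
    Finset.Nat.sum_antidiagonal_eq_sum_range_succ_mk] at h
  simp only [coeff_E123] at h
  have hn : (n.factorial : ℝ) ≠ 0 := Nat.cast_ne_zero.mpr (Nat.factorial_ne_zero _)
  calc hermiteKdF3 n (x₁ + x₂) (y₁ + y₂) (z₁ + z₂)
      = (n.factorial : ℝ) * (hermiteKdF3 n (x₁ + x₂) (y₁ + y₂) (z₁ + z₂) / n.factorial) := by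
        field_simp
    _ = (n.factorial : ℝ) * ∑ k ∈ Finset.range (n + 1),
          hermiteKdF3 k x₂ y₂ z₂ / k.factorial *
            (hermiteKdF3 (n - k) x₁ y₁ z₁ / (n - k).factorial) := by rw [h]
    _ = ∑ k ∈ Finset.range (n + 1),
          (n.choose k : ℝ) * hermiteKdF3 (n - k) x₁ y₁ z₁ * hermiteKdF3 k x₂ y₂ z₂ := by
        rw [Finset.mul_sum]
        refine Finset.sum_congr rfl fun k hk => ?_
        simp only [Finset.mem_range, Nat.lt_succ_iff] at hk
        rw [Nat.cast_choose ℝ hk]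
        have h1 : ((n - k).factorial : ℝ) ≠ 0 := Nat.cast_ne_zero.mpr (Nat.factorial_ne_zero _)
        have h2 : (k.factorial : ℝ) ≠ 0 := Nat.cast_ne_zero.mpr (Nat.factorial_ne_zero _)
        field_simp
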